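/- Algorithm correctness for tropical polynomial preconditioning: given finite reals c_1, ..., c_n (with c_0 = 0), define c'_k as the value at k of the lower convex hull (greatest convex minorant) of the points (j, c_j), j = 0,...,n. Then the min-plus polynomial with coefficients c'_k equals the one with coefficients c_k as functions of x (min_k (c_k + (n-k)x) = min_k (c'_k + (n-k)x)), and the new coefficients satisfy c'_1 − c'_0 ≤ c'_2 − c'_1 ≤ ⋯ ≤ c'_n − c'_{n-1}, so the new polynomial factors into linear factors. -/

import Mathlib

open Finset

private lemma inf'_add_const (s : Finset ℕ) (hs : s.Nonempty) (g : ℕ → ℝ) (x : ℝ) :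
    s.inf' hs (fun k => g k + x) = s.inf' hs g + x := by
  apply le_antisymm
  · obtain ⟨k, hk, hke⟩ := s.exists_mem_eq_inf' hs g
    calc s.inf' hs (fun k => g k + x) ≤ g k + x := inf'_le _ hk
    _ = s.inf' hs g + x := by rw [hke]
  · exact le_inf' _ _ fun k hk => add_le_add (inf'_le _ hk) le_rfl

private lemma inf'_range_succ (m : ℕ) (f : ℕ → ℝ) :
    (range (m + 1 + 1)).inf' (by simp) f = f (m + 1) ⊓ (range (m + 1)).inf' (by simp) f := by
  apply le_antisymm
  · refine le_inf (inf'_le _ (by simp)) (le_inf' _ _ fun k hk => inf'_le _ ?_)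
    simp only [mem_range] at hk ⊢; omega
  · refine le_inf' _ _ fun k hk => ?_
    simp only [mem_range] at hk
    rcases Nat.lt_succ_iff_lt_or_eq.mp hk with h | h
    · exact inf_le_right.trans (inf'_le _ (mem_range.mpr h))
    · subst h; exact inf_le_left

private lemma mono_of_conv (n : ℕ) (c' : ℕ → ℝ)
    (hconv : ∀ j, j + 2 ≤ n → c' (j + 1) - c' j ≤ c' (j + 2) - c' (j + 1)) :
    ∀ j, j + 1 ≤ n → ∀ i, i ≤ j → c' (i + 1) - c' i ≤ c' (j + 1) - c' j := by
  intro j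
  induction j with
  | zero => intro _ i hi; interval_cases i; exact le_rfl
  | succ j ihj =>
    intro hjn i hi
    rcases Nat.lt_succ_iff_lt_or_eq.mp (Nat.lt_succ_of_le hi) with h | h
    · exact (ihj (by omega) i (by omega)).trans (hconv j (by omega))
    · subst h; exact le_rfl

private lemma key_lemma (x : ℝ) : ∀ (n : ℕ) (c' : ℕ → ℝ), c' 0 = 0 →
    (∀ i j, i ≤ j → j + 1 ≤ n → c' (i + 1) - c' i ≤ c' (j + 1) - c' j) →
    (range (n + 1)).inf' (by simp) (fun k => c' k + ((n - k : ℕ) : ℝ) * x)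
      = ∑ i ∈ range n, min x (c' (i + 1) - c' i) := by
  intro n
  induction n with
  | zero => intro c' h0 _; simp [h0]
  | succ n ih =>
    intro c' h0 hmono
    rw [inf'_range_succ n (fun k => c' k + ((n + 1 - k : ℕ) : ℝ) * x)]
    have hcong : (range (n + 1)).inf' (by simp) (fun k => c' k + ((n + 1 - k : ℕ) : ℝ) * x)
        = (range (n + 1)).inf' (by simp)
            (fun k => (c' k + ((n - k : ℕ) : ℝ) * x) + x) := by
      refine inf'_congr _ rfl fun k hk => ?_
      have hk' : k ≤ n := by simpa [Nat.lt_succ_iff] using hk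
      have : (n + 1 - k : ℕ) = (n - k) + 1 := by omega
      rw [this]; push_cast; ring
    rw [hcong, inf'_add_const,
      ih c' h0 (fun i j hij hjn => hmono i j hij (by omega)),
      Finset.sum_range_succ]
    have htel : c' n = ∑ i ∈ range n, (c' (i + 1) - c' i) := by
      rw [Finset.sum_range_sub, h0, sub_zero]
    have hc : c' (n + 1) = ∑ i ∈ range n, (c' (i + 1) - c' i) + (c' (n + 1) - c' n) := by
      linarith
    simp only [Nat.sub_self, Nat.cast_zero, zero_mul, add_zero]
    rcases le_total x (c' (n + 1) - c' n) with h | h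
    · have hS : ∑ i ∈ range n, min x (c' (i + 1) - c' i)
          ≤ ∑ i ∈ range n, (c' (i + 1) - c' i) :=
        Finset.sum_le_sum fun i _ => min_le_right _ _
      rw [min_eq_left h, min_eq_right (by linarith)]
    · have hS : ∑ i ∈ range n, min x (c' (i + 1) - c' i)
          = ∑ i ∈ range n, (c' (i + 1) - c' i) := by
        refine Finset.sum_congr rfl fun i hi => ?_
        have : c' (i + 1) - c' i ≤ c' (n + 1) - c' n :=
          hmono i n ((mem_range.mp hi).le) le_rfl
        exact min_eq_right (by linarith)
      rw [min_eq_right h, hS, min_eq_left (by linarith)]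
      exact hc

theorem minplus_convex_hull_preconditioning (n : ℕ) (hn : 1 ≤ n) (c c' : ℕ → ℝ)
    (hc0 : c 0 = 0) (hc'0 : c' 0 = 0)
    (hconv : ∀ j, j + 2 ≤ n → c' (j + 1) - c' j ≤ c' (j + 2) - c' (j + 1))
    (hle : ∀ j ≤ n, c' j ≤ c j)
    (hgreatest : ∀ d : ℕ → ℝ,
      (∀ j, j + 2 ≤ n → d (j + 1) - d j ≤ d (j + 2) - d (j + 1)) →
      (∀ j ≤ n, d j ≤ c j) → ∀ j ≤ n, d j ≤ c' j) :
    (∀ x : ℝ,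
        (range (n + 1)).inf' (by simp) (fun k => c k + ((n - k : ℕ) : ℝ) * x)
          = (range (n + 1)).inf' (by simp) (fun k => c' k + ((n - k : ℕ) : ℝ) * x)) ∧
    (∀ x : ℝ,
        (range (n + 1)).inf' (by simp) (fun k => c k + ((n - k : ℕ) : ℝ) * x)
          = ∑ i ∈ range n, min x (c' (i + 1) - c' i)) := by
  have hmono : ∀ i j, i ≤ j → j + 1 ≤ n → c' (i + 1) - c' i ≤ c' (j + 1) - c' j :=
    fun i j hij hjn => mono_of_conv n c' hconv j hjn i hij
  have h1 : ∀ x : ℝ,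
      (range (n + 1)).inf' (by simp) (fun k => c k + ((n - k : ℕ) : ℝ) * x)
        = (range (n + 1)).inf' (by simp) (fun k => c' k + ((n - k : ℕ) : ℝ) * x) := by
    intro x
    set m := (range (n + 1)).inf' (by simp) (fun k => c k + ((n - k : ℕ) : ℝ) * x) with hm
    apply le_antisymm
    · -- m ≤ inf' over c'
      set d : ℕ → ℝ := fun j => m - ((n - j : ℕ) : ℝ) * x with hd
      have hdconv : ∀ j, j + 2 ≤ n → d (j + 1) - d j ≤ d (j + 2) - d (j + 1) := by
        intro j hj
        have e1 : (n - j : ℕ) = (n - (j + 1)) + 1 := by omega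
        have e2 : (n - (j + 1) : ℕ) = (n - (j + 2)) + 1 := by omega
        simp only [hd]
        rw [e1, e2]
        push_cast
        ring_nf
        exact le_rfl
      have hdle : ∀ j ≤ n, d j ≤ c j := by
        intro j hj
        have : m ≤ c j + ((n - j : ℕ) : ℝ) * x :=
          inf'_le _ (mem_range.mpr (by omega))
        simp only [hd]; linarith
      refine le_inf' _ _ fun k hk => ?_
      have hkn : k ≤ n := Nat.lt_succ_iff.mp (mem_range.mp hk)
      have := hgreatest d hdconv hdle k hkn
      simp only [hd] at this
      linarith
    · refine le_inf' _ _ fun k hk => ?_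
      have hkn : k ≤ n := Nat.lt_succ_iff.mp (mem_range.mp hk)
      calc (range (n + 1)).inf' (by simp) (fun k => c' k + ((n - k : ℕ) : ℝ) * x)
          ≤ c' k + ((n - k : ℕ) : ℝ) * x := inf'_le _ hk
        _ ≤ c k + ((n - k : ℕ) : ℝ) * x := add_le_add (hle k hkn) le_rfl
  refine ⟨h1, fun x => ?_⟩
  rw [h1 x]
  exact key_lemma x n c' hc'0 hmono
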